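/- Let (Gᵢ)_{i ∈ ι} be a family of groups, let G = ∗_{i ∈ ι} Gᵢ be their free product (the coproduct of the family, with canonical injections of_i : Gᵢ → G), and let M be an abelian group on which G acts by group automorphisms. Call a function f : G → M a 1-cocycle if f(gh) = f(g) · (g • f(h)) for all g, h ∈ G. Then the restriction map sending a 1-cocycle f on G to the family (f ∘ of_i)_{i ∈ ι} is a bijection from the set of 1-cocycles on G with values in M onto the product over i ∈ ι of the sets of 1-cocycles on Gᵢ with values in M (where Gᵢ acts on M through of_i); moreover this bijection is a group isomorphism for pointwise multiplication of cocycles. -/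

import Mathlib

/-- A 1-cocycle on a group `K` acting (via `φ`) by automorphisms on an abelian group `M`. -/
def IsCocycle {K M : Type*} [Group K] [CommGroup M] (φ : K →* MulAut M) (f : K → M) : Prop :=
  ∀ g h : K, f (g * h) = f g * φ g (f h)

/-- Pointwise multiplication of 1-cocycles (the cocycles form a group since `M` is abelian). -/
instance {K M : Type*} [Group K] [CommGroup M] (φ : K →* MulAut M) :
    Mul {f : K → M // IsCocycle φ f} :=
  ⟨fun f f' => ⟨fun g => f.1 g * f'.1 g, fun g h => by
    simp only []; rw [f.2 g h, f'.2 g h, map_mul]; exact mul_mul_mul_comm _ _ _ _⟩⟩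

/-- The restriction of a 1-cocycle on a free product `∗ᵢ Gᵢ` to the factors. -/
def restrictCocycle {ι : Type*} {Gs : ι → Type*} [∀ i, Group (Gs i)] {M : Type*} [CommGroup M]
    (φ : Monoid.CoprodI Gs →* MulAut M)
    (f : {f : Monoid.CoprodI Gs → M // IsCocycle φ f}) (i : ι) :
    {f : Gs i → M // IsCocycle (φ.comp Monoid.CoprodI.of) f} :=
  ⟨fun g => f.1 (Monoid.CoprodI.of g), fun g h => by
    simp only []; rw [map_mul]; exact f.2 _ _⟩

/-- Restriction to the factors is a bijection from the 1-cocycles on the free product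
`∗ᵢ Gᵢ` with values in `M` onto the product of the sets of 1-cocycles on the `Gᵢ`
(each acting on `M` through the canonical injection), and it is multiplicative for
pointwise multiplication of cocycles, hence a group isomorphism. -/
theorem stmt18 {ι : Type*} (Gs : ι → Type*) [∀ i, Group (Gs i)] (M : Type*) [CommGroup M]
    (φ : Monoid.CoprodI Gs →* MulAut M) :
    Function.Bijective (restrictCocycle φ) ∧
      ∀ f f' : {f : Monoid.CoprodI Gs → M // IsCocycle φ f},
        restrictCocycle φ (f * f') = restrictCocycle φ f * restrictCocycle φ f' := by
  refine ⟨⟨?_, ?_⟩, fun f f' => rfl⟩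
  · -- injectivity
    intro f f' h
    ext g
    induction g using Monoid.CoprodI.induction_on with
    | one =>
      have h1 : f.1 1 = f.1 1 * f.1 1 := by
        conv_lhs => rw [show (1 : Monoid.CoprodI Gs) = 1 * 1 from (one_mul 1).symm, f.2 1 1]
        simp
      have h1' : f'.1 1 = f'.1 1 * f'.1 1 := by
        conv_lhs => rw [show (1 : Monoid.CoprodI Gs) = 1 * 1 from (one_mul 1).symm, f'.2 1 1]
        simp
      rw [mul_eq_left.mp h1.symm, mul_eq_left.mp h1'.symm]
    | of i g =>
      have := congrFun (congrArg Subtype.val (congrFun h i)) g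
      exact this
    | mul g₁ g₂ ih₁ ih₂ =>
      rw [f.2 g₁ g₂, f'.2 g₁ g₂, ih₁, ih₂]
  · -- surjectivity
    intro F
    -- build homs into the semidirect product
    let hs : ∀ i, Gs i →* M ⋊[φ] Monoid.CoprodI Gs := fun i =>
      { toFun := fun g => ⟨(F i).1 g, Monoid.CoprodI.of g⟩
        map_one' := by
          have h1 : (F i).1 1 = (F i).1 1 * (F i).1 1 := by
            conv_lhs => rw [show (1 : Gs i) = 1 * 1 from (one_mul 1).symm, (F i).2 1 1]
            simp
          ext <;> simp [mul_eq_left.mp h1.symm]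
        map_mul' := fun g h => by
          ext
          · exact (F i).2 g h
          · simp }
    let H := Monoid.CoprodI.lift hs
    have hright : ∀ g : Monoid.CoprodI Gs, (H g).right = g := by
      intro g
      have : (SemidirectProduct.rightHom.comp H : Monoid.CoprodI Gs →* Monoid.CoprodI Gs)
          = MonoidHom.id _ := by
        apply Monoid.CoprodI.ext_hom
        intro i
        ext g
        simp [H, hs, SemidirectProduct.rightHom]
      exact congrFun (congrArg (fun ψ => ψ.toFun) this) g
    refine ⟨⟨fun g => (H g).left, fun g h => ?_⟩, ?_⟩
    · have := congrArg SemidirectProduct.left (map_mul H g h)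
      simpa [hright g, SemidirectProduct.mul_left] using this
    · funext i
      apply Subtype.ext
      funext g
      show (H (Monoid.CoprodI.of g)).left = (F i).1 g
      simp [H, hs]
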